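/- (Newton–MacLaurin inequality) Let λ ∈ Γ_k and let k, l, r, s be integers with k > l ≥ 0, r > s ≥ 0, k ≥ r and l ≥ s. Then [ (σ_k(λ)/C(n,k)) / (σ_l(λ)/C(n,l)) ]^{1/(k−l)} ≤ [ (σ_r(λ)/C(n,r)) / (σ_s(λ)/C(n,s)) ]^{1/(r−s)}, where C(n,m) = n!/(m!(n−m)!). -/

import Mathlib

open Finset Set

noncomputable section

/-- `sigmaV m lam`: the m-th elementary symmetric function σ_m(λ) (σ_0 = 1). -/
def sigmaV {n : ℕ} (m : ℕ) (lam : Fin n → ℝ) : ℝ :=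
  ∑ s ∈ Finset.powersetCard m Finset.univ, ∏ i ∈ s, lam i

/-- σ_m(λ|i): σ_m of the vector λ with the i-th entry set to zero. -/
def sigmaVd {n : ℕ} (m : ℕ) (i : Fin n) (lam : Fin n → ℝ) : ℝ :=
  sigmaV m (Function.update lam i 0)

/-- The Gårding cone Γ_k : σ_m(λ) > 0 for all 1 ≤ m ≤ k. -/
def GammaV {n : ℕ} (k : ℕ) (lam : Fin n → ℝ) : Prop :=
  ∀ m, 1 ≤ m → m ≤ k → 0 < sigmaV m lam

/-- σ_m of a matrix: the sum of its m×m principal minors (equivalently, the m-th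
elementary symmetric function σ_m(λ(A)) of its eigenvalues). -/
def sigmaM {n : ℕ} (m : ℕ) (A : Fin n → Fin n → ℝ) : ℝ :=
  ∑ s ∈ Finset.powersetCard m Finset.univ,
    Matrix.det ((Matrix.of A).submatrix (fun i : ↥s => i.1) (fun i : ↥s => i.1))

/-- λ(A) ∈ Γ_k, expressed via principal minors: σ_m(A) > 0 for all 1 ≤ m ≤ k. -/
def GammaM {n : ℕ} (k : ℕ) (A : Fin n → Fin n → ℝ) : Prop :=
  ∀ m, 1 ≤ m → m ≤ k → 0 < sigmaM m A

/-- Partial derivative ∂u/∂x_i. -/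
def pd {n : ℕ} (i : Fin n) (u : (Fin n → ℝ) → ℝ) : (Fin n → ℝ) → ℝ :=
  fun x => fderiv ℝ u x (Pi.single i 1)

/-- The gradient Du. -/
def gradV {n : ℕ} (u : (Fin n → ℝ) → ℝ) (x : Fin n → ℝ) : Fin n → ℝ :=
  fun i => pd i u x

/-- The Hessian D²u. -/
def hessM {n : ℕ} (u : (Fin n → ℝ) → ℝ) (x : Fin n → ℝ) : Fin n → Fin n → ℝ :=
  fun i j => pd j (pd i u) x

/-- Euclidean inner product. -/
def dotV {n : ℕ} (a b : Fin n → ℝ) : ℝ := ∑ i, a i * b i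

/-- Euclidean norm. -/
def normV {n : ℕ} (a : Fin n → ℝ) : ℝ := Real.sqrt (dotV a a)

/-- Frobenius norm of a matrix (used for |D²u|). -/
def normM {n : ℕ} (A : Fin n → Fin n → ℝ) : ℝ := Real.sqrt (∑ i, ∑ j, (A i j)^2)

/-- `ν` is the outer unit normal to the convex domain Ω at the boundary point x:
the unit vector with ⟨y − x, ν⟩ ≤ 0 for all y ∈ closure Ω. -/
def IsOuterNormalAt {n : ℕ} (Ω : Set (Fin n → ℝ)) (x ν : Fin n → ℝ) : Prop :=
  normV ν = 1 ∧ ∀ y ∈ closure Ω, dotV (y - x) ν ≤ 0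

/-- Ω is a domain of boundary regularity Cᵐ: it is the sublevel set of a Cᵐ defining
function whose gradient does not vanish on the boundary. -/
def BoundaryRegular {n : ℕ} (Ω : Set (Fin n → ℝ)) (m : WithTop ℕ∞) : Prop :=
  ∃ ρ : (Fin n → ℝ) → ℝ, ContDiff ℝ m ρ ∧ Ω = {x | ρ x < 0} ∧
    frontier Ω = {x | ρ x = 0} ∧ ∀ x ∈ frontier Ω, gradV ρ x ≠ 0

/-- Euclidean distance d(x) = dist(x, ∂Ω). -/
def distBd {n : ℕ} (Ω : Set (Fin n → ℝ)) (x : Fin n → ℝ) : ℝ :=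
  sInf ((fun y => normV (x - y)) '' frontier Ω)

/-- The collar Ω_μ = {x ∈ Ω : dist(x, ∂Ω) < μ}. -/
def collar {n : ℕ} (Ω : Set (Fin n → ℝ)) (μ : ℝ) : Set (Fin n → ℝ) :=
  {x ∈ Ω | distBd Ω x < μ}

/-- The quadratic form A(v,v) = Σ_{ij} A_{ij} v_i v_j. -/
def quadF {n : ℕ} (A : Fin n → Fin n → ℝ) (v : Fin n → ℝ) : ℝ :=
  ∑ i, ∑ j, A i j * v i * v j

/-- Time derivative u_t(x,t). -/
def ut {n : ℕ} (u : ℝ → (Fin n → ℝ) → ℝ) (x : Fin n → ℝ) (t : ℝ) : ℝ :=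
  deriv (fun s => u s x) t

/-- ∂[σ_k(λ)/σ_l(λ)]/∂λ_i, via the explicit formula
(σ_{k−1}(λ|i)σ_l(λ) − σ_k(λ)σ_{l−1}(λ|i))/σ_l(λ)², with σ_{−1} := 0. -/
def dQuotV {n : ℕ} (k l : ℕ) (i : Fin n) (lam : Fin n → ℝ) : ℝ :=
  (sigmaVd (k-1) i lam * sigmaV l lam
    - sigmaV k lam * (if l = 0 then 0 else sigmaVd (l-1) i lam)) / (sigmaV l lam)^2

/-- σ_m(A|i): σ_m of the matrix A with the i-th row and column deleted, i.e. the sum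
of the m×m principal minors avoiding index i. -/
def sigmaMd {n : ℕ} (m : ℕ) (i : Fin n) (A : Fin n → Fin n → ℝ) : ℝ :=
  ∑ s ∈ (Finset.powersetCard m Finset.univ).filter (fun s => i ∉ s),
    Matrix.det ((Matrix.of A).submatrix (fun j : ↥s => j.1) (fun j : ↥s => j.1))

/-- ∂[σ_k(A)/σ_l(A)]/∂a_{ii}, via ∂σ_m(A)/∂a_{ii} = σ_{m−1}(A|i) (σ_{−1} := 0):
(σ_{k−1}(A|i)σ_l(A) − σ_k(A)σ_{l−1}(A|i))/σ_l(A)². -/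
def dQuotM {n : ℕ} (k l : ℕ) (i : Fin n) (A : Fin n → Fin n → ℝ) : ℝ :=
  (sigmaMd (k-1) i A * sigmaM l A
    - sigmaM k A * (if l = 0 then 0 else sigmaMd (l-1) i A)) / (sigmaM l A)^2

/-- F^{ij}: the derivative of B ↦ log(σ_k(B)/σ_l(B)) at A in the matrix direction
E_{ij} (the derivative of log(σ_k/σ_l) with respect to the (i,j) entry). -/
def Fcoef {n : ℕ} (k l : ℕ) (i j : Fin n) (A : Fin n → Fin n → ℝ) : ℝ :=
  fderiv ℝ (fun B : Fin n → Fin n → ℝ => Real.log (sigmaM k B / sigmaM l B)) A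
    (Pi.single i (Pi.single j 1))

end

section NewtonMacLaurinAux

open Finset Polynomial

private lemma sigmaV_zero' {n : ℕ} (lam : Fin n → ℝ) : sigmaV 0 lam = 1 := by
  simp [sigmaV]

private lemma sigmaV_one' {n : ℕ} (lam : Fin n → ℝ) : sigmaV 1 lam = ∑ i, lam i := by
  rw [sigmaV, Finset.powersetCard_one, Finset.sum_map]
  simp

private lemma sigmaV_top' {n : ℕ} (lam : Fin n → ℝ) : sigmaV n lam = ∏ i, lam i := by
  rw [sigmaV, show Finset.powersetCard n (Finset.univ : Finset (Fin n)) =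
      ({Finset.univ} : Finset (Finset (Fin n))) by
    simpa using Finset.powersetCard_self (Finset.univ : Finset (Fin n)),
    Finset.sum_singleton]

private lemma sigmaV_compl' {N : ℕ} (lam : Fin N → ℝ) (hz : ∀ i, lam i ≠ 0) {j : ℕ}
    (hj : j ≤ N) :
    sigmaV (N - j) lam = (∏ i, lam i) * sigmaV j (fun i => (lam i)⁻¹) := by
  rw [sigmaV, sigmaV, Finset.mul_sum]
  refine Finset.sum_nbij' (fun s => sᶜ) (fun t => tᶜ) ?_ ?_ ?_ ?_ ?_
  · intro s hs
    rw [Finset.mem_powersetCard_univ] at hs ⊢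
    rw [Finset.card_compl, hs, Fintype.card_fin]
    omega
  · intro t ht
    rw [Finset.mem_powersetCard_univ] at ht ⊢
    rw [Finset.card_compl, ht, Fintype.card_fin]
  · intro s _; exact compl_compl s
  · intro t _; exact compl_compl t
  · intro s hs
    have hne : ∏ i ∈ sᶜ, lam i ≠ 0 := Finset.prod_ne_zero_iff.2 fun i _ => hz i
    rw [Finset.prod_inv_distrib, ← Finset.prod_mul_prod_compl s lam]
    field_simp

private lemma sigmaV_vieta' {n : ℕ} (lam : Fin n → ℝ) {j : ℕ} (hj : j ≤ n) :
    (∏ i : Fin n, (X + C (lam i))).coeff (n - j) = sigmaV j lam := by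
  rw [Finset.prod_X_add_C_coeff _ lam
    (by simp [Nat.sub_le] : n - j ≤ #(Finset.univ : Finset (Fin n)))]
  simp [sigmaV, Nat.sub_sub_self hj]

private lemma nat_choose_id' {n j : ℕ} (hj : j ≤ n) :
    (n + 1 - j) * (n+1).choose j = (n + 1) * n.choose j := by
  have h1 := Nat.add_one_mul_choose_eq n (n - j)
  rw [Nat.choose_symm hj] at h1
  have h2 : n - j + 1 = n + 1 - j := by omega
  rw [h2, Nat.choose_symm (by omega : j ≤ n + 1)] at h1
  simpa [mul_comm] using h1.symm

private lemma exists_enum' (M : Multiset ℝ) {n : ℕ} (h : Multiset.card M = n) :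
    ∃ mu : Fin n → ℝ, Multiset.map mu Finset.univ.val = M := by
  have hl : M.toList.length = n := by rw [Multiset.length_toList, h]
  refine ⟨M.toList.get ∘ (finCongr hl.symm), ?_⟩
  have h1 : Multiset.map (finCongr hl.symm) Finset.univ.val =
      (Finset.univ : Finset (Fin M.toList.length)).val := by
    have := Finset.univ_map_equiv_to_embedding (finCongr hl.symm)
    exact congrArg Finset.val this
  rw [← Multiset.map_map, h1]
  have h2 : (Finset.univ : Finset (Fin M.toList.length)).val =
      ↑(List.finRange M.toList.length) := rfl
  rw [h2, Multiset.map_coe, List.map_get_finRange, Multiset.coe_toList]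

private lemma deriv_step₁ (n : ℕ) (lam : Fin (n+1) → ℝ) :
    ∃ mu : Fin n → ℝ, ∀ j ≤ n,
      (n + 1 : ℝ) * sigmaV j mu = ((n + 1 - j : ℕ) : ℝ) * sigmaV j lam := by
  set f : ℝ[X] := ∏ i : Fin (n+1), (X + C (lam i)) with hf
  have hfm : f.Monic := monic_prod_of_monic _ _ fun i _ => monic_X_add_C _
  have hfd : f.natDegree = n + 1 := by
    rw [hf, natDegree_prod _ _ fun i _ => (monic_X_add_C (lam i)).ne_zero]
    simp [natDegree_X_add_C]
  have hf2 : f = ((Finset.univ.val.map (fun i => -lam i)).map (fun a => X - C a)).prod := by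
    rw [hf, Finset.prod_eq_multiset_prod, Multiset.map_map]
    congr 1
    apply Multiset.map_congr rfl
    intro i _
    simp [sub_neg_eq_add]
  have hroots : f.roots = Finset.univ.val.map (fun i => -lam i) := by
    rw [hf2, roots_multiset_prod_X_sub_C]
  have hrc : Multiset.card f.roots = n + 1 := by simp [hroots]
  set g := derivative f with hg
  have hgdle : g.natDegree ≤ n := by
    have := natDegree_derivative_le f
    rw [← hg, hfd] at this
    omega
  have hcard : Multiset.card g.roots = n := by
    have h1 := Polynomial.card_roots_le_derivative f
    rw [← hg] at h1
    have h2 := Polynomial.card_roots' g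
    omega
  have hgd : g.natDegree = n := by
    have h2 := Polynomial.card_roots' g
    omega
  have hlc : g.leadingCoeff = ((n + 1 : ℕ) : ℝ) := by
    rw [Polynomial.leadingCoeff, hgd, hg, coeff_derivative]
    rw [show f.coeff (n+1) = 1 by simpa [hfd] using hfm.coeff_natDegree]
    push_cast; ring
  have hgfact := Polynomial.C_leadingCoeff_mul_prod_multiset_X_sub_C (p := g)
    (by rw [hcard, hgd])
  obtain ⟨mu, hmu⟩ := exists_enum' (g.roots.map (fun a => -a)) (n := n)
    (by rw [Multiset.card_map]; exact hcard)
  have hprod : (∏ i : Fin n, (X + C (mu i))) = (g.roots.map fun a => X - C a).prod := by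
    rw [Finset.prod_eq_multiset_prod,
      show (fun i => X + C (mu i)) = (fun a => X + C a) ∘ mu from rfl,
      ← Multiset.map_map, hmu, Multiset.map_map]
    congr 1
    apply Multiset.map_congr rfl
    intro a _
    simp [sub_eq_add_neg]
  refine ⟨mu, fun j hj => ?_⟩
  have e1 : g.coeff (n - j) = ((n + 1 : ℕ) : ℝ) * sigmaV j mu := by
    conv_lhs => rw [← hgfact]
    rw [← hprod, coeff_C_mul, hlc, sigmaV_vieta' mu hj]
  have e2 : g.coeff (n - j) = sigmaV j lam * ((n + 1 - j : ℕ) : ℝ) := by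
    rw [hg, coeff_derivative]
    have h3 : n - j + 1 = (n + 1) - j := by omega
    rw [h3, sigmaV_vieta' lam (by omega : j ≤ n + 1)]
    exact_mod_cast congrArg (fun t => (sigmaV j lam) * (Nat.cast t : ℝ)) h3
  rw [show ((n:ℝ)+1) = ((n+1 : ℕ) : ℝ) by push_cast; ring, ← e1, e2]
  ring

private lemma deriv_step₂ (n : ℕ) (lam : Fin (n+1) → ℝ) :
    ∃ mu : Fin n → ℝ, ∀ j ≤ n,
      sigmaV j mu / (n.choose j : ℝ) = sigmaV j lam / (((n+1).choose j : ℕ) : ℝ) := by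
  obtain ⟨mu, hmu⟩ := deriv_step₁ n lam
  refine ⟨mu, fun j hj => ?_⟩
  have h1 := hmu j hj
  have h2 : ((n + 1 - j : ℕ) : ℝ) * (((n+1).choose j : ℕ) : ℝ)
      = ((n + 1 : ℕ) : ℝ) * ((n.choose j : ℕ) : ℝ) := by
    exact_mod_cast congrArg (Nat.cast : ℕ → ℝ) (nat_choose_id' hj)
  have p1 : (0:ℝ) < (n.choose j : ℝ) := by
    exact_mod_cast Nat.choose_pos hj
  have p2 : (0:ℝ) < (((n+1).choose j : ℕ) : ℝ) := by
    exact_mod_cast Nat.choose_pos (by omega : j ≤ n + 1)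
  rw [div_eq_div_iff p1.ne' p2.ne']
  have hne : ((n:ℝ) + 1) ≠ 0 := by positivity
  apply mul_left_cancel₀ hne
  push_cast at h1 h2 ⊢
  linear_combination (((n+1).choose j : ℕ) : ℝ) * h1 + sigmaV j lam * h2

private lemma newton' : ∀ (n : ℕ) (lam : Fin n → ℝ) (m : ℕ), m + 2 ≤ n →
    sigmaV m lam / (n.choose m : ℝ) * (sigmaV (m+2) lam / (n.choose (m+2) : ℝ)) ≤
      (sigmaV (m+1) lam / (n.choose (m+1) : ℝ))^2 := by
  intro n
  induction n with
  | zero => exact fun lam m h => absurd h (by omega)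
  | succ n IH =>
    have step : ∀ (lam : Fin (n+1) → ℝ) (m : ℕ), m + 2 ≤ n →
        sigmaV m lam / ((n+1).choose m : ℝ) *
          (sigmaV (m+2) lam / ((n+1).choose (m+2) : ℝ)) ≤
          (sigmaV (m+1) lam / ((n+1).choose (m+1) : ℝ))^2 := by
      intro lam m hm
      obtain ⟨mu, hmu⟩ := deriv_step₂ n lam
      rw [← hmu m (by omega), ← hmu (m+1) (by omega), ← hmu (m+2) (by omega)]
      exact IH mu m hm
    intro lam m hm
    by_cases hc : m + 2 ≤ n
    · exact step lam m hc
    · have hm2 : m + 2 = n + 1 := by omega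
      by_cases hn1 : n = 1
      · subst hn1
        have hm0 : m = 0 := by omega
        subst hm0
        have e2 : sigmaV 2 lam = lam 0 * lam 1 := by
          rw [sigmaV_top' (n := 1+1) lam, Fin.prod_univ_two]
        have e1 : sigmaV 1 lam = lam 0 + lam 1 := by
          rw [sigmaV_one', Fin.sum_univ_two]
        norm_num [sigmaV_zero', e1, e2]
        nlinarith [sq_nonneg (lam 0 - lam 1)]
      · have hn2 : 2 ≤ n := by omega
        by_cases hzero : ∃ i, lam i = 0
        · obtain ⟨i0, hi0⟩ := hzero
          have hσN : sigmaV (m+2) lam = 0 := by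
            rw [hm2, sigmaV_top']
            exact Finset.prod_eq_zero (Finset.mem_univ i0) hi0
          rw [hσN, zero_div, mul_zero]
          positivity
        · push_neg at hzero
          set ν : Fin (n+1) → ℝ := fun i => (lam i)⁻¹ with hν
          set Pr : ℝ := ∏ i, lam i with hPr
          have h0 := step ν 0 (by omega)
          rw [sigmaV_zero'] at h0
          have em : sigmaV m lam = Pr * sigmaV 2 ν := by
            have := sigmaV_compl' lam hzero (j := 2) (by omega)
            rwa [show n + 1 - 2 = m by omega] at this
          have em1 : sigmaV (m+1) lam = Pr * sigmaV 1 ν := by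
            have := sigmaV_compl' lam hzero (j := 1) (by omega)
            rwa [show n + 1 - 1 = m + 1 by omega] at this
          have em2 : sigmaV (m+2) lam = Pr * 1 := by
            have := sigmaV_compl' lam hzero (j := 0) (by omega)
            rw [show n + 1 - 0 = m + 2 by omega] at this
            rwa [sigmaV_zero'] at this
          have ec : ((n+1).choose m : ℝ) = ((n+1).choose 2 : ℝ) := by
            have : (n+1).choose (n+1-2) = (n+1).choose 2 :=
              Nat.choose_symm (by omega)
            rw [show n + 1 - 2 = m by omega] at this
            exact_mod_cast congrArg (Nat.cast : ℕ → ℝ) this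
          have ec1 : ((n+1).choose (m+1) : ℝ) = ((n+1).choose 1 : ℝ) := by
            have : (n+1).choose (n+1-1) = (n+1).choose 1 :=
              Nat.choose_symm (by omega)
            rw [show n + 1 - 1 = m + 1 by omega] at this
            exact_mod_cast congrArg (Nat.cast : ℕ → ℝ) this
          have ec2 : ((n+1).choose (m+2) : ℝ) = 1 := by
            rw [hm2]
            simp
          calc sigmaV m lam / ((n+1).choose m : ℝ) *
                (sigmaV (m+2) lam / ((n+1).choose (m+2) : ℝ))
              = Pr^2 * (1 / ((n+1).choose 0 : ℝ) *
                  (sigmaV 2 ν / ((n+1).choose 2 : ℝ))) := by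
                rw [em, em2, ec, ec2]
                simp only [Nat.choose_zero_right, Nat.cast_one]
                ring
            _ ≤ Pr^2 * ((sigmaV 1 ν / ((n+1).choose 1 : ℝ))^2) :=
                mul_le_mul_of_nonneg_left h0 (sq_nonneg _)
            _ = (sigmaV (m+1) lam / ((n+1).choose (m+1) : ℝ))^2 := by
                rw [em1, ec1]
                ring

private lemma slope_ineq' (d : ℕ → ℝ) (k l r s : ℕ)
    (hd : ∀ i j, i ≤ j → j + 1 ≤ k → d j ≤ d i)
    (hlk : l < k) (hsr : s < r) (hrk : r ≤ k) (hsl : s ≤ l) :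
    (∑ j ∈ Finset.Ico l k, d j) * ((r:ℝ) - s) ≤
      (∑ j ∈ Finset.Ico s r, d j) * ((k:ℝ) - l) := by
  have cast_card : ∀ a b : ℕ, a ≤ b → ((#(Finset.Ico a b) : ℕ) : ℝ) = (b:ℝ) - a := by
    intro a b hab
    rw [Nat.card_Ico]
    push_cast [Nat.cast_sub hab]
    ring
  have split1 : ∑ j ∈ Finset.Ico s k, d j =
      ∑ j ∈ Finset.Ico s l, d j + ∑ j ∈ Finset.Ico l k, d j :=
    (Finset.sum_Ico_consecutive d hsl hlk.le).symm
  have A1 : ∑ j ∈ Finset.Ico l k, d j ≤ ((k:ℝ) - l) * d l := by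
    have h := Finset.sum_le_card_nsmul (Finset.Ico l k) d (d l)
      (fun j hj => by
        rw [Finset.mem_Ico] at hj
        exact hd l j hj.1 (by omega))
    rw [nsmul_eq_mul, cast_card l k hlk.le] at h
    exact h
  have B1 : ((l:ℝ) - s) * d l ≤ ∑ j ∈ Finset.Ico s l, d j := by
    have h := Finset.card_nsmul_le_sum (Finset.Ico s l) d (d l)
      (fun j hj => by
        rw [Finset.mem_Ico] at hj
        exact hd j l (by omega) (by omega))
    rw [nsmul_eq_mul, cast_card s l hsl] at h
    exact h
  have hls : (0:ℝ) ≤ (l:ℝ) - s := by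
    have : (s:ℝ) ≤ l := by exact_mod_cast hsl
    linarith
  have hkl : (0:ℝ) < (k:ℝ) - l := by
    have : (l:ℝ) < k := by exact_mod_cast hlk
    linarith
  have step1 : (∑ j ∈ Finset.Ico l k, d j) * ((k:ℝ) - s) ≤
      (∑ j ∈ Finset.Ico s k, d j) * ((k:ℝ) - l) := by
    rw [split1]
    nlinarith [mul_le_mul_of_nonneg_right A1 hls, mul_le_mul_of_nonneg_left B1 hkl.le]
  have split2 : ∑ j ∈ Finset.Ico s k, d j =
      ∑ j ∈ Finset.Ico s r, d j + ∑ j ∈ Finset.Ico r k, d j :=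
    (Finset.sum_Ico_consecutive d hsr.le hrk).symm
  have A2 : ∑ j ∈ Finset.Ico r k, d j ≤ ((k:ℝ) - r) * d (r-1) := by
    have h := Finset.sum_le_card_nsmul (Finset.Ico r k) d (d (r-1))
      (fun j hj => by
        rw [Finset.mem_Ico] at hj
        exact hd (r-1) j (by omega) (by omega))
    rw [nsmul_eq_mul, cast_card r k hrk] at h
    exact h
  have B2 : ((r:ℝ) - s) * d (r-1) ≤ ∑ j ∈ Finset.Ico s r, d j := by
    have h := Finset.card_nsmul_le_sum (Finset.Ico s r) d (d (r-1))
      (fun j hj => by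
        rw [Finset.mem_Ico] at hj
        exact hd j (r-1) (by omega) (by omega))
    rw [nsmul_eq_mul, cast_card s r hsr.le] at h
    exact h
  have hrs : (0:ℝ) < (r:ℝ) - s := by
    have : (s:ℝ) < r := by exact_mod_cast hsr
    linarith
  have hkr : (0:ℝ) ≤ (k:ℝ) - r := by
    have : (r:ℝ) ≤ k := by exact_mod_cast hrk
    linarith
  have step2 : (∑ j ∈ Finset.Ico s k, d j) * ((r:ℝ) - s) ≤
      (∑ j ∈ Finset.Ico s r, d j) * ((k:ℝ) - s) := by
    rw [split2]
    nlinarith [mul_le_mul_of_nonneg_right A2 hrs.le, mul_le_mul_of_nonneg_left B2 hkr]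
  have hks : (0:ℝ) < (k:ℝ) - s := by linarith
  nlinarith [mul_le_mul_of_nonneg_right step1 hrs.le,
    mul_le_mul_of_nonneg_right step2 hkl.le]

end NewtonMacLaurinAux

/-- Newton–MacLaurin: for λ ∈ Γ_k and k > l ≥ 0, r > s ≥ 0, k ≥ r, l ≥ s,
[(σ_k/C(n,k))/(σ_l/C(n,l))]^{1/(k−l)} ≤ [(σ_r/C(n,r))/(σ_s/C(n,s))]^{1/(r−s)}. -/
theorem statement_16 (n k l r s : ℕ) (hk : 1 ≤ k) (hkn : k ≤ n)
    (lam : Fin n → ℝ) (hΓ : GammaV k lam)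
    (hlk : l < k) (hsr : s < r) (hrk : r ≤ k) (hsl : s ≤ l) :
    ((sigmaV k lam / (n.choose k : ℝ)) / (sigmaV l lam / (n.choose l : ℝ)))
        ^ ((1 : ℝ) / ((k : ℝ) - (l : ℝ))) ≤
      ((sigmaV r lam / (n.choose r : ℝ)) / (sigmaV s lam / (n.choose s : ℝ)))
        ^ ((1 : ℝ) / ((r : ℝ) - (s : ℝ))) := by
  classical
  set p : ℕ → ℝ := fun j => sigmaV j lam / (n.choose j : ℝ) with hp
  have hppos : ∀ j, j ≤ k → 0 < p j := by
    intro j hj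
    rcases Nat.eq_zero_or_pos j with h0 | h1
    · subst h0
      show 0 < sigmaV 0 lam / ((n.choose 0 : ℕ) : ℝ)
      rw [sigmaV_zero']
      simp
    · exact div_pos (hΓ j h1 hj)
        (by exact_mod_cast Nat.choose_pos (le_trans hj hkn))
  set F : ℕ → ℝ := fun j => Real.log (p j) with hF
  set d : ℕ → ℝ := fun j => F (j+1) - F j with hdd
  have hstep : ∀ j, j + 2 ≤ k → d (j+1) ≤ d j := by
    intro j hj
    have h0 := hppos j (by omega)
    have h1 := hppos (j+1) (by omega)
    have h2 := hppos (j+2) (by omega)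
    have hne' : p j * p (j+2) ≤ (p (j+1))^2 := newton' n lam j (le_trans hj hkn)
    have hlog := Real.log_le_log (by positivity) hne'
    rw [Real.log_mul h0.ne' h2.ne', Real.log_pow] at hlog
    show F (j+1+1) - F (j+1) ≤ F (j+1) - F j
    simp only [hF]
    push_cast at hlog
    linarith
  have hd : ∀ i j, i ≤ j → j + 1 ≤ k → d j ≤ d i := by
    intro i j
    induction j with
    | zero =>
      intro h1 _
      have h : i = 0 := by omega
      rw [h]
    | succ m ih =>
      intro h1 h2
      rcases Nat.eq_or_lt_of_le h1 with he | hlt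
      · rw [← he]
      · have hs := hstep m (by omega)
        have := ih (by omega) (by omega)
        linarith
  have tel : ∀ a b : ℕ, a ≤ b → F b - F a = ∑ j ∈ Finset.Ico a b, d j := by
    intro a b hab
    have hr : ∀ m : ℕ, ∑ j ∈ Finset.range m, d j = F m - F 0 := by
      intro m
      simp only [hdd]
      exact Finset.sum_range_sub F m
    rw [Finset.sum_Ico_eq_sub _ hab, hr a, hr b]
    ring
  have slope := slope_ineq' d k l r s hd hlk hsr hrk hsl
  rw [← tel l k hlk.le, ← tel s r hsr.le] at slope
  have hxk := hppos k le_rfl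
  have hxl := hppos l hlk.le
  have hxr := hppos r hrk
  have hxs := hppos s (le_trans hsl hlk.le)
  have hx : 0 < p k / p l := div_pos hxk hxl
  have hy : 0 < p r / p s := div_pos hxr hxs
  show (p k / p l) ^ ((1:ℝ)/((k:ℝ) - (l:ℝ))) ≤ (p r / p s) ^ ((1:ℝ)/((r:ℝ) - (s:ℝ)))
  rw [Real.rpow_def_of_pos hx, Real.rpow_def_of_pos hy, Real.exp_le_exp,
    Real.log_div hxk.ne' hxl.ne', Real.log_div hxr.ne' hxs.ne']
  have hkl : (0:ℝ) < (k:ℝ) - l := by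
    have : (l:ℝ) < k := by exact_mod_cast hlk
    linarith
  have hrs : (0:ℝ) < (r:ℝ) - s := by
    have : (s:ℝ) < r := by exact_mod_cast hsr
    linarith
  rw [mul_one_div, mul_one_div, div_le_div_iff₀ hkl hrs]
  simp only [hF] at slope
  exact slope
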